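/- Three inscribed polygons force closing: Let P₁,…,P_n ∈ ℝ³ with ⟨Pᵢ,Pᵢ⟩ ≠ 0, and set M := M_{P_n} ∘ ⋯ ∘ M_{P₁}. If there exist three pairwise non-parallel nonzero vectors A¹, A², A³ on the conic C (⟨Aʲ,Aʲ⟩ = 0) such that M Aʲ is a nonzero scalar multiple of Aʲ for j = 1, 2, 3 (i.e., three different n-gons inscribed in C close up through P₁,…,P_n), then M is a nonzero scalar multiple of the identity, i.e., P₁,…,P_n have the closing property with respect to C. -/
import Mathlib


/-- Minkowski product on ℝ³. -/
def mink (X Y : Fin 3 → ℝ) : ℝ := X 0 * Y 0 + X 1 * Y 1 - X 2 * Y 2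

/-- The reversion map in the point `P` (with `⟨P,P⟩ ≠ 0`), as a linear map on
representing vectors: `M_P X = ⟨P,P⟩X − 2⟨X,P⟩P`. -/
def rev (P X : Fin 3 → ℝ) : Fin 3 → ℝ := mink P P • X - (2 * mink X P) • P

/-- `chain n P X = (M_{P n} ∘ ⋯ ∘ M_{P 1}) X`, the composition of the reversions in
`P 0, …, P (n-1)`, applied in this order. -/
def chain : (n : ℕ) → (Fin n → (Fin 3 → ℝ)) → (Fin 3 → ℝ) → (Fin 3 → ℝ)
  | 0, _, X => X
  | n + 1, P, X => rev (P (Fin.last n)) (chain n (fun i => P i.castSucc) X)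

/-- The points `P 0, …, P (n-1)` have the closing property with respect to the conic
`C` iff `M_{P n} ∘ ⋯ ∘ M_{P 1}` is a nonzero scalar multiple of the identity. -/
def closes (n : ℕ) (P : Fin n → (Fin 3 → ℝ)) : Prop :=
  ∃ c : ℝ, c ≠ 0 ∧ ∀ X, chain n P X = c • X

lemma rev_pres (P X Y : Fin 3 → ℝ) :
    mink (rev P X) (rev P Y) = (mink P P)^2 * mink X Y := by
  simp only [rev, mink, Pi.sub_apply, Pi.smul_apply, smul_eq_mul]; ring

lemma rev_add (P X Y : Fin 3 → ℝ) : rev P (X + Y) = rev P X + rev P Y := by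
  funext i
  simp only [rev, mink, Pi.sub_apply, Pi.smul_apply, Pi.add_apply, smul_eq_mul]; ring

lemma rev_smul (P : Fin 3 → ℝ) (a : ℝ) (X : Fin 3 → ℝ) : rev P (a • X) = a • rev P X := by
  funext i
  simp only [rev, mink, Pi.sub_apply, Pi.smul_apply, smul_eq_mul]; ring

lemma chain_add (n : ℕ) (P : Fin n → (Fin 3 → ℝ)) (X Y : Fin 3 → ℝ) :
    chain n P (X + Y) = chain n P X + chain n P Y := by
  induction n with
  | zero => rfl
  | succ m ih => simp only [chain, ih, rev_add]

lemma chain_smul (n : ℕ) (P : Fin n → (Fin 3 → ℝ)) (a : ℝ) (X : Fin 3 → ℝ) :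
    chain n P (a • X) = a • chain n P X := by
  induction n with
  | zero => rfl
  | succ m ih => simp only [chain, ih, rev_smul]

lemma chain_pres (n : ℕ) (P : Fin n → (Fin 3 → ℝ)) (hP : ∀ i, mink (P i) (P i) ≠ 0) :
    ∃ μ : ℝ, μ ≠ 0 ∧ ∀ X Y, mink (chain n P X) (chain n P Y) = μ * mink X Y := by
  induction n with
  | zero => exact ⟨1, one_ne_zero, fun X Y => (one_mul _).symm⟩
  | succ m ih =>
    obtain ⟨μ, hμ, hpres⟩ := ih (fun i => P i.castSucc) (fun i => hP _)
    refine ⟨(mink (P (Fin.last m)) (P (Fin.last m)))^2 * μ,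
      mul_ne_zero (pow_ne_zero _ (hP _)) hμ, fun X Y => ?_⟩
    simp only [chain, rev_pres, hpres]; ring

lemma mink_smul_left (a : ℝ) (X Y : Fin 3 → ℝ) : mink (a • X) Y = a * mink X Y := by
  simp only [mink, Pi.smul_apply, smul_eq_mul]; ring

lemma mink_comm (X Y : Fin 3 → ℝ) : mink X Y = mink Y X := by unfold mink; ring

/-- Two nonzero null vectors that are non-parallel have nonzero Minkowski product. -/
lemma mink_ne_zero (X Y : Fin 3 → ℝ) (hX0 : X ≠ 0) (hX : mink X X = 0) (hY : mink Y Y = 0)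
    (hli : LinearIndependent ℝ ![X, Y]) : mink X Y ≠ 0 := by
  intro h
  have hx2 : X 2 ≠ 0 := by
    intro h2
    apply hX0
    unfold mink at hX
    rw [h2] at hX
    have h0 : X 0 = 0 := by nlinarith [sq_nonneg (X 0), sq_nonneg (X 1)]
    have h1 : X 1 = 0 := by nlinarith [sq_nonneg (X 0), sq_nonneg (X 1)]
    funext i; fin_cases i <;> simp [h0, h1, h2]
  unfold mink at hX hY h
  have hsq : (X 0 * Y 1 - X 1 * Y 0)^2 = 0 := by
    linear_combination (Y 0 ^ 2 + Y 1 ^ 2) * hX + X 2 ^ 2 * hY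
      - (X 0 * Y 0 + X 1 * Y 1 + X 2 * Y 2) * h
  have hcross : X 0 * Y 1 - X 1 * Y 0 = 0 := by
    exact pow_eq_zero_iff (by norm_num) |>.mp hsq
  have e0 : X 2 * Y 0 = Y 2 * X 0 := by
    have h' : X 2 * (X 2 * Y 0 - Y 2 * X 0) = 0 := by
      linear_combination (-(Y 0)) * hX + X 0 * h - X 1 * hcross
    rcases mul_eq_zero.mp h' with h'' | h''
    · exact absurd h'' hx2
    · linarith
  have e1 : X 2 * Y 1 = Y 2 * X 1 := by
    have h' : X 2 * (X 2 * Y 1 - Y 2 * X 1) = 0 := by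
      linear_combination (-(Y 1)) * hX + X 1 * h + X 0 * hcross
    rcases mul_eq_zero.mp h' with h'' | h''
    · exact absurd h'' hx2
    · linarith
  have hlast := (LinearIndependent.pair_iff.mp hli (Y 2) (-(X 2)) ?_).2
  · exact hx2 (neg_eq_zero.mp hlast)
  · funext i
    fin_cases i <;>
      simp only [Pi.add_apply, Pi.smul_apply, Pi.zero_apply, smul_eq_mul]
    · show Y 2 * X 0 + -X 2 * Y 0 = 0; linarith
    · show Y 2 * X 1 + -X 2 * Y 1 = 0; linarith
    · show Y 2 * X 2 + -X 2 * Y 2 = 0; ring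

/-- **Three inscribed polygons force closing.** If the composition
`M = M_{P n} ∘ ⋯ ∘ M_{P 1}` of reversions in points off the conic `C` fixes three
pairwise non-parallel points of `C` projectively (three different inscribed `n`-gons
close up), then `M` is a nonzero scalar multiple of the identity, i.e. the points
`P 0, …, P (n-1)` have the closing property with respect to `C`. -/
theorem three_inscribed_polygons_force_closing
    (n : ℕ) (P : Fin n → (Fin 3 → ℝ)) (hP : ∀ i, mink (P i) (P i) ≠ 0)
    (A : Fin 3 → (Fin 3 → ℝ))
    (hA0 : ∀ j, A j ≠ 0)
    (hAC : ∀ j, mink (A j) (A j) = 0)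
    (hApar : ∀ j k, j ≠ k → LinearIndependent ℝ ![A j, A k])
    (hfix : ∀ j, ∃ c : ℝ, c ≠ 0 ∧ chain n P (A j) = c • A j) :
    closes n P := by
  unfold closes
  have hs : ∀ j k, j ≠ k → mink (A j) (A k) ≠ 0 := fun j k hjk =>
    mink_ne_zero _ _ (hA0 j) (hAC j) (hAC k) (hApar j k hjk)
  choose c hc hcA using hfix
  obtain ⟨μ, hμ, hpres⟩ := chain_pres n P hP
  have key : ∀ j k, j ≠ k → c j * c k = μ := by
    intro j k hjk
    have hjk' := hpres (A j) (A k)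
    rw [hcA j, hcA k, mink_smul_left, mink_comm, mink_smul_left, mink_comm (A k)] at hjk'
    have hs' := hs j k hjk
    have : (c j * c k - μ) * mink (A j) (A k) = 0 := by linear_combination hjk'
    rcases mul_eq_zero.mp this with h | h
    · linarith
    · exact absurd h hs'
  have h01 : c 0 * c 1 = μ := key 0 1 (by decide)
  have h02 : c 0 * c 2 = μ := key 0 2 (by decide)
  have h12 : c 1 * c 2 = μ := key 1 2 (by decide)
  have hc1 : c 1 = c 0 := by
    have := h12.trans h02.symm
    exact mul_right_cancel₀ (hc 2) this
  have hc2 : c 2 = c 0 := by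
    have h' := h12.trans h01.symm
    rw [mul_comm (c 0) (c 1)] at h'
    exact mul_left_cancel₀ (hc 1) h'
  have hli : LinearIndependent ℝ A := by
    rw [Fintype.linearIndependent_iff]
    intro g hg
    have hmg : ∀ j : Fin 3, g 0 * mink (A 0) (A j) + g 1 * mink (A 1) (A j)
        + g 2 * mink (A 2) (A j) = 0 := by
      intro j
      have e0 := congrFun hg 0
      have e1 := congrFun hg 1
      have e2 := congrFun hg 2
      simp only [Fin.sum_univ_three, Pi.add_apply, Pi.smul_apply, Pi.zero_apply,
        smul_eq_mul] at e0 e1 e2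
      unfold mink
      linear_combination (A j 0) * e0 + (A j 1) * e1 - (A j 2) * e2
    have m0 := hmg 0; have m1 := hmg 1; have m2 := hmg 2
    rw [hAC 0, ← mink_comm (A 0) (A 1), ← mink_comm (A 0) (A 2)] at m0
    rw [hAC 1, ← mink_comm (A 1) (A 2)] at m1
    rw [hAC 2] at m2
    have s01 := hs 0 1 (by decide); have s02 := hs 0 2 (by decide)
    have s12 := hs 1 2 (by decide)
    have hg2 : g 2 = 0 := by
      have h1 : g 2 * (2 * (mink (A 1) (A 2) * mink (A 0) (A 2))) = 0 := by
        linear_combination mink (A 1) (A 2) * m0 + mink (A 0) (A 2) * m1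
          - mink (A 0) (A 1) * m2
      rcases mul_eq_zero.mp h1 with h | h
      · exact h
      · exact absurd h (mul_ne_zero two_ne_zero (mul_ne_zero s12 s02))
    have hg1 : g 1 = 0 := by
      have h1 : g 1 * mink (A 0) (A 1) = 0 := by
        rw [hg2] at m0; linarith
      rcases mul_eq_zero.mp h1 with h | h
      · exact h
      · exact absurd h s01
    have hg0 : g 0 = 0 := by
      have h1 : g 0 * mink (A 0) (A 1) = 0 := by
        rw [hg2] at m1; linarith
      rcases mul_eq_zero.mp h1 with h | h
      · exact h
      · exact absurd h s01
    intro i; fin_cases i <;> assumption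
  have hcard : Fintype.card (Fin 3) = Module.finrank ℝ (Fin 3 → ℝ) := by simp
  let B := basisOfLinearIndependentOfCardEqFinrank hli hcard
  have hB : ⇑B = A := coe_basisOfLinearIndependentOfCardEqFinrank hli hcard
  refine ⟨c 0, hc 0, fun X => ?_⟩
  have hrepr : X = B.repr X 0 • A 0 + B.repr X 1 • A 1 + B.repr X 2 • A 2 := by
    conv_lhs => rw [← B.sum_repr X]
    simp [hB, Fin.sum_univ_three]
  rw [hrepr, chain_add, chain_add, chain_smul, chain_smul, chain_smul,
    hcA 0, hcA 1, hcA 2, hc1, hc2]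
  simp only [smul_smul, smul_add]
  rw [mul_comm (B.repr X 0) (c 0), mul_comm (B.repr X 1) (c 0), mul_comm (B.repr X 2) (c 0)]
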